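/- Let n(t) := (cos t, sin t, 0) and fix κ² > 0. Consider C¹ maps m : [−1,1] × ℝ → ℝ³ with |m(z,t)| = 1 for all (z,t), m(z, t+2π) = m(z,t), and satisfying the weak axial symmetry condition ∫_{−π}^{π} m₁(z,t) dt = 0 and ∫_{−π}^{π} m₂(z,t) dt = 0 for every z ∈ [−1,1]. Define E(m) := ∫_{−1}^{1} ∫_{−π}^{π} ( |∂_z m|² + |∂_t m|² + κ² |m(z,t) × n(t)|² ) dt dz. If m minimizes E in this class, then ∂_z m ≡ 0, and moreover: (i) if 0 < κ² < 1 then m ≡ (0,0,1) or m ≡ (0,0,−1); (ii) if κ² > 1 then m(z,t) = n(t) for all (z,t) or m(z,t) = −n(t) for all (z,t); (iii) if κ² = 1 then there exists θ ∈ ℝ such that m(z,t) = (sin θ cos t, sin θ sin t, cos θ) for all (z,t). The minimal value of E in this class equals 4πκ² if 0 < κ² ≤ 1 and 4π if κ² ≥ 1. -/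

import Mathlib

open Real Set MeasureTheory

/-- Squared Euclidean norm of a vector in `ℝ³`. -/
noncomputable def sq3 (v : Fin 3 → ℝ) : ℝ := v 0 ^ 2 + v 1 ^ 2 + v 2 ^ 2

/-- The outward unit normal `n(t) = (cos t, sin t, 0)` to the circular cylinder. -/
noncomputable def nvec (t : ℝ) : Fin 3 → ℝ := ![Real.cos t, Real.sin t, 0]

/-- The admissible class of weakly axially symmetric configurations:
`C¹` maps `m : [−1,1] × ℝ → ℝ³` (represented by `C¹` maps on `ℝ²`), of pointwise
unit norm, `2π`-periodic in `t`, whose in-plane component has zero angular average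
for every `z ∈ [−1,1]`. -/
def AdmissibleWAS (m : ℝ → ℝ → Fin 3 → ℝ) : Prop :=
  ContDiff ℝ 1 (fun p : ℝ × ℝ => m p.1 p.2) ∧
  (∀ z t : ℝ, sq3 (m z t) = 1) ∧
  (∀ z t : ℝ, m z (t + 2 * π) = m z t) ∧
  (∀ z ∈ Icc (-1 : ℝ) 1,
    (∫ t in (-π)..π, m z t 0) = 0 ∧ (∫ t in (-π)..π, m z t 1) = 0)

/-- The micromagnetic energy on the circular cylinder `[−1,1] × S¹`. -/
noncomputable def cylEnergy (κ : ℝ) (m : ℝ → ℝ → Fin 3 → ℝ) : ℝ :=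
  ∫ z in (-1 : ℝ)..1, ∫ t in (-π)..π,
    (sq3 (deriv (fun w => m w t) z) + sq3 (deriv (fun s => m z s) t)
      + κ ^ 2 * sq3 (crossProduct (m z t) (nvec t)))

open Complex
open scoped ENNReal

noncomputable section

noncomputable section

lemma two_pi_pos' : (0:ℝ) < 2*π := two_pi_pos

lemma periodic_ext {α : Type*} {f g : ℝ → α}
    (hf : Function.Periodic f (2*π)) (hg : Function.Periodic g (2*π))
    (h : ∀ t ∈ Ico (-π) (-π + 2*π), f t = g t) : ∀ t, f t = g t := by
  intro t
  have hp : (0:ℝ) < 2*π := two_pi_pos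
  have hmem := toIcoMod_mem_Ico hp (-π) t
  have hdef : toIcoMod hp (-π) t = t - toIcoDiv hp (-π) t • (2*π) := rfl
  calc f t = f (t - toIcoDiv hp (-π) t • (2*π)) := (hf.sub_zsmul_eq _).symm
    _ = g (t - toIcoDiv hp (-π) t • (2*π)) := h _ (hdef ▸ hmem)
    _ = g t := hg.sub_zsmul_eq _

section parseval

variable (u : ℝ → ℂ)

lemma hb' : (-π:ℝ) < -π + 2*π := by linarith [pi_pos]

/-- Parseval + summability for a continuous `2π`-periodic function. -/
lemma parseval_periodic (hc : Continuous u) (hper : ∀ t, u (t + 2*π) = u t) :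
    Summable (fun n : ℤ => ‖fourierCoeffOn (hb' ) u n‖^2) ∧
    2*π * ∑' n : ℤ, ‖fourierCoeffOn (hb') u n‖^2 = ∫ t in (-π)..(-π+2*π), ‖u t‖^2 := by
  haveI hT : Fact ((0:ℝ) < 2*π) := ⟨two_pi_pos⟩
  set g : C(AddCircle (2*π), ℂ) :=
    ⟨AddCircle.liftIco (2*π) (-π) u,
      AddCircle.liftIco_continuous (by rw [hper (-π)]) hc.continuousOn⟩ with hg
  set G := ContinuousMap.toLp (E := ℂ) 2 AddCircle.haarAddCircle ℂ g with hG
  have key1 : ∀ n : ℤ, fourierCoeff (G : AddCircle (2*π) → ℂ) n = fourierCoeffOn (hb') u n := by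
    intro n
    rw [hG, fourierCoeff_toLp]
    exact fourierCoeff_liftIco_eq u n
  have hsum : Summable (fun n : ℤ => ‖fourierCoeffOn (hb') u n‖^2) := by
    have h1 := (lp.memℓp (fourierBasis.repr G)).summable (by norm_num)
    have : (fun n : ℤ => ‖(fourierBasis.repr G) n‖ ^ (2 : ENNReal).toReal)
        = fun n : ℤ => ‖fourierCoeffOn (hb') u n‖^2 := by
      funext n
      rw [fourierBasis_repr, key1]
      norm_num
    rwa [this] at h1
  refine ⟨hsum, ?_⟩
  have hpars := tsum_sq_fourierCoeff G
  simp_rw [key1] at hpars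
  rw [hpars]
  -- now: 2π * ∫ ‖G t‖² ∂haar = ∫ t in interval, ‖u t‖²
  have hae : (fun t => ‖(G : AddCircle (2*π) → ℂ) t‖^2)
      =ᵐ[AddCircle.haarAddCircle] (fun t => ‖g t‖^2) := by
    filter_upwards [ContinuousMap.coeFn_toLp (p := 2) (𝕜 := ℂ) AddCircle.haarAddCircle g] with x hx
    rw [hx]
  rw [integral_congr_ae hae]
  have hvol : ∫ x : AddCircle (2*π), ‖g x‖^2 ∂(volume)
      = (2*π) * ∫ x : AddCircle (2*π), ‖g x‖^2 ∂AddCircle.haarAddCircle := by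
    rw [AddCircle.volume_eq_smul_haarAddCircle, integral_smul_measure,
      ENNReal.toReal_ofReal two_pi_pos.le, smul_eq_mul]
  rw [← hvol, ← AddCircle.intervalIntegral_preimage (2*π) (-π) (fun x => ‖g x‖^2)]
  apply intervalIntegral.integral_congr_ae
  have hbne : ∀ᵐ x : ℝ, x ≠ -π + 2*π := by
    rw [MeasureTheory.ae_iff]
    simp only [ne_eq, not_not]
    have : {x : ℝ | x = -π + 2*π} = {-π + 2*π} := rfl
    rw [this]
    exact measure_singleton _
  filter_upwards [hbne] with x hx hxmem
  rw [uIoc_of_le (hb').le] at hxmem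
  have : x ∈ Ico (-π) (-π + 2*π) := ⟨hxmem.1.le, lt_of_le_of_ne hxmem.2 hx⟩
  rw [hg]
  simp only [ContinuousMap.coe_mk]
  rw [AddCircle.liftIco_coe_apply this]

end parseval

lemma coeffOn_deriv {u u' : ℝ → ℂ}
    (hu : ∀ t, HasDerivAt u (u' t) t) (hc' : Continuous u')
    (hper : ∀ t, u (t + 2*π) = u t) (n : ℤ) (hn : n ≠ 0) :
    fourierCoeffOn (hb') u' n = (n : ℂ) * I * fourierCoeffOn (hb') u n := by
  haveI hT : Fact ((0:ℝ) < 2*π) := ⟨two_pi_pos⟩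
  have h := fourierCoeffOn_of_hasDerivAt (hb') hn (fun x _ => hu x)
    (hc'.intervalIntegrable _ _)
  rw [hper (-π), sub_self, mul_zero, zero_sub] at h
  have hπ : (π:ℂ) ≠ 0 := Complex.ofReal_ne_zero.mpr pi_ne_zero
  have hnne : (n:ℂ) ≠ 0 := Int.cast_ne_zero.mpr hn
  have h2 : ((-π + 2*π : ℝ) : ℂ) - ((-π : ℝ) : ℂ) = 2*π := by push_cast; ring
  rw [h2] at h
  have hIne : (I : ℂ) ≠ 0 := I_ne_zero
  field_simp at h
  have e : ∀ (b : ℝ) (hb : -π < b), b = -π + 2*π → fourierCoeffOn hb u n = fourierCoeffOn (hb') u n ∧ fourierCoeffOn hb u' n = fourierCoeffOn (hb') u' n := by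
    rintro b hb rfl; exact ⟨rfl, rfl⟩
  rw [(e _ _ (by ring)).1, (e _ _ (by ring)).2] at h
  have hkey : (2*(π:ℂ)) * fourierCoeffOn (hb') u' n
      = (2*(π:ℂ)) * ((n:ℂ) * I * fourierCoeffOn (hb') u n) := by
    linear_combination (-2*(π:ℂ)) * h
  have h2π : (2*(π:ℂ)) ≠ 0 := by simp [hπ]
  exact mul_left_cancel₀ h2π hkey

lemma coeffOn_zero {u : ℝ → ℂ}
    (hmean : (∫ t in (-π)..π, u t) = 0) :
    fourierCoeffOn (hb') u 0 = 0 := by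
  haveI hT : Fact ((0:ℝ) < 2*π) := ⟨two_pi_pos⟩
  rw [fourierCoeffOn_eq_integral]
  have h1 : EqOn (fun x : ℝ => (fourier (-(0:ℤ)) (x : AddCircle ((-π + 2*π) - (-π)))) • u x)
      (fun x : ℝ => u x) (uIcc (-π) (-π + 2*π)) := by
    intro x _
    simp only [neg_zero, fourier_zero, one_smul]
  rw [intervalIntegral.integral_congr h1]
  have h2 : (-π + 2*π : ℝ) = π := by ring
  rw [h2, hmean, smul_zero]

theorem wirtinger_ineq {u u' : ℝ → ℂ}
    (hu : ∀ t, HasDerivAt u (u' t) t) (hc' : Continuous u')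
    (hper : ∀ t, u (t + 2*π) = u t)
    (hmean : (∫ t in (-π)..π, u t) = 0) :
    (∫ t in (-π)..π, ‖u t‖^2) ≤ (∫ t in (-π)..π, ‖u' t‖^2) ∧
    ((∫ t in (-π)..π, ‖u' t‖^2) = (∫ t in (-π)..π, ‖u t‖^2) →
      ∃ c₁ c₂ : ℂ, ∀ t, u t = c₁ * Complex.exp (t * I) + c₂ * Complex.exp (-(t * I))) := by
  haveI hT : Fact ((0:ℝ) < 2*π) := ⟨two_pi_pos⟩
  have hπb : (-π + 2*π : ℝ) = π := by ring
  have hdiffu : Differentiable ℝ u := fun t => (hu t).differentiableAt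
  have hcu : Continuous u := hdiffu.continuous
  have hper' : ∀ t, u' (t + 2*π) = u' t := by
    intro t
    have h2 := HasDerivAt.comp_add_const t (2*π) (hu (t + 2*π))
    rw [show (fun s => u (s + 2*π)) = u from funext hper] at h2
    exact h2.unique (hu t)
  obtain ⟨S1, P1⟩ := parseval_periodic u hcu hper
  obtain ⟨S2, P2⟩ := parseval_periodic u' hc' hper'
  have hiu : ∫ t in (-π)..(-π+2*π), ‖u t‖^2 = ∫ t in (-π)..π, ‖u t‖^2 := by rw [hπb]
  have hiu' : ∫ t in (-π)..(-π+2*π), ‖u' t‖^2 = ∫ t in (-π)..π, ‖u' t‖^2 := by rw [hπb]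
  replace P1 := P1.trans hiu
  replace P2 := P2.trans hiu'
  set F : ℤ → ℂ := fourierCoeffOn (hb') u with hF
  set F' : ℤ → ℂ := fourierCoeffOn (hb') u' with hF'
  have hF0 : F 0 = 0 := coeffOn_zero hmean
  have hFd : ∀ n : ℤ, n ≠ 0 → F' n = (n:ℂ) * I * F n := fun n hn => coeffOn_deriv hu hc' hper n hn
  have hnormF' : ∀ n : ℤ, n ≠ 0 → ‖F' n‖ = |(n:ℝ)| * ‖F n‖ := by
    intro n hn
    rw [hFd n hn, norm_mul, norm_mul, Complex.norm_I, mul_one]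
    norm_num
  have hnorm : ∀ n : ℤ, ‖F n‖^2 ≤ ‖F' n‖^2 := by
    intro n
    rcases eq_or_ne n 0 with h|h
    · rw [h, hF0]; simp
    · rw [hnormF' n h, mul_pow]
      have h1 : (1:ℝ) ≤ |(n:ℝ)| := by
        rw [← Int.cast_abs]
        exact_mod_cast Int.one_le_abs h
      have h2 : (1:ℝ) ≤ |(n:ℝ)|^2 := by nlinarith
      calc ‖F n‖^2 = 1 * ‖F n‖^2 := (one_mul _).symm
        _ ≤ |(n:ℝ)|^2 * ‖F n‖^2 := mul_le_mul_of_nonneg_right h2 (sq_nonneg _)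
  constructor
  · rw [← P1, ← P2]
    have := Summable.tsum_le_tsum hnorm S1 S2
    nlinarith [pi_pos]
  · intro heq
    have hts : ∑' n : ℤ, ‖F n‖^2 = ∑' n : ℤ, ‖F' n‖^2 := by
      have h2 : 2*π * ∑' n : ℤ, ‖F n‖^2 = 2*π * ∑' n : ℤ, ‖F' n‖^2 := by
        rw [P1, P2, heq]
      exact mul_left_cancel₀ two_pi_pos.ne' h2
    have hterm : ∀ n : ℤ, ‖F n‖^2 = ‖F' n‖^2 := by
      by_contra hcon
      push_neg at hcon
      obtain ⟨n₀, hn₀⟩ := hcon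
      have := Summable.tsum_lt_tsum hnorm (lt_of_le_of_ne (hnorm n₀) hn₀) S1 S2
      linarith [hts]
    have hFzero : ∀ n : ℤ, n ≠ 1 → n ≠ -1 → F n = 0 := by
      intro n h1 h1'
      rcases eq_or_ne n 0 with h|h
      · rw [h]; exact hF0
      · have h2 := hterm n
        rw [hnormF' n h, mul_pow] at h2
        have h3 : (2:ℝ) ≤ |(n:ℝ)| := by
          rw [← Int.cast_abs]
          have : (2:ℤ) ≤ |n| := by rcases abs_cases n with ⟨h4,_⟩|⟨h4,_⟩ <;> omega
          exact_mod_cast this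
        have h5 : (4:ℝ) ≤ |(n:ℝ)|^2 := by nlinarith
        have h6 : 3 * ‖F n‖^2 ≤ 0 := by nlinarith [sq_nonneg ‖F n‖]
        have h7 : ‖F n‖^2 = 0 := le_antisymm (by linarith) (sq_nonneg _)
        exact norm_eq_zero.mp ((pow_eq_zero_iff two_ne_zero).mp h7)
    -- reconstruction
    set g : C(AddCircle (2*π), ℂ) :=
      ⟨AddCircle.liftIco (2*π) (-π) u,
        AddCircle.liftIco_continuous (by rw [hper (-π)]) hcu.continuousOn⟩ with hg
    have key : ∀ n : ℤ, fourierCoeff (⇑g) n = F n := fun n => fourierCoeff_liftIco_eq u n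
    have hsummable : Summable (fourierCoeff (⇑g)) := by
      apply summable_of_ne_finset_zero (s := ({1, -1} : Finset ℤ))
      intro b hb
      simp only [Finset.mem_insert, Finset.mem_singleton] at hb
      push_neg at hb
      rw [key]
      exact hFzero b hb.1 hb.2
    have hgx : ∀ x : AddCircle (2*π), g x = F 1 • fourier 1 x + F (-1) • fourier (-1) x := by
      intro x
      have h1 := has_pointwise_sum_fourier_series_of_summable hsummable x
      have h2 : HasSum (fun i : ℤ => fourierCoeff (⇑g) i • fourier i x)
          (∑ b ∈ ({1, -1} : Finset ℤ), fourierCoeff (⇑g) b • fourier b x) := by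
        apply hasSum_sum_of_ne_finset_zero
        intro b hb
        simp only [Finset.mem_insert, Finset.mem_singleton] at hb
        push_neg at hb
        rw [key, hFzero b hb.1 hb.2, zero_smul]
      have h3 := h1.unique h2
      rw [h3, Finset.sum_insert (by decide), Finset.sum_singleton, key, key]
    refine ⟨F 1, F (-1), ?_⟩
    apply periodic_ext (f := u)
      (g := fun t => F 1 * Complex.exp (t * I) + F (-1) * Complex.exp (-(t * I)))
      hper
    · intro t
      have hc1 : ((t + 2*π : ℝ) : ℂ) * I = (t:ℂ) * I + 2*(π:ℂ)*I := by push_cast; ring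
      have he : Complex.exp ((↑(t + 2*π) : ℂ) * I) = Complex.exp ((t:ℂ) * I) := by
        rw [hc1, Complex.exp_add, Complex.exp_two_pi_mul_I, mul_one]
      have he2 : Complex.exp (-((↑(t + 2*π) : ℂ) * I)) = Complex.exp (-((t:ℂ) * I)) := by
        rw [hc1, neg_add, Complex.exp_add, Complex.exp_neg (2*(π:ℂ)*I),
          Complex.exp_two_pi_mul_I, inv_one, mul_one]
      simp only []
      rw [he, he2]
    · intro t ht
      have h1 : u t = g (↑t : AddCircle (2*π)) := by
        rw [hg]
        simp only [ContinuousMap.coe_mk]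
        exact (AddCircle.liftIco_coe_apply ht).symm
      have hπC : (π:ℂ) ≠ 0 := Complex.ofReal_ne_zero.mpr pi_ne_zero
      rw [h1, hgx]
      have hf1 : (fourier (1:ℤ) (↑t : AddCircle (2*π))) = Complex.exp (t * I) := by
        rw [fourier_coe_apply]
        congr 1
        push_cast
        rw [div_eq_iff (by simp [Complex.ofReal_ne_zero.mpr pi_ne_zero] : ((2:ℂ)*(π:ℂ)) ≠ 0)]
        ring
      have hf2 : (fourier (-1:ℤ) (↑t : AddCircle (2*π))) = Complex.exp (-(t * I)) := by
        rw [fourier_coe_apply]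
        congr 1
        push_cast
        rw [div_eq_iff (by simp [Complex.ofReal_ne_zero.mpr pi_ne_zero] : ((2:ℂ)*(π:ℂ)) ≠ 0)]
        ring
      rw [hf1, hf2, smul_eq_mul, smul_eq_mul]

/-! Generic helpers -/

lemma sq3_nonneg (v : Fin 3 → ℝ) : 0 ≤ sq3 v := by unfold sq3; positivity

lemma sq3_eq_zero {v : Fin 3 → ℝ} (h : sq3 v = 0) : v = 0 := by
  unfold sq3 at h
  have h0 : v 0 = 0 := by nlinarith [sq_nonneg (v 0), sq_nonneg (v 1), sq_nonneg (v 2)]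
  have h1 : v 1 = 0 := by nlinarith [sq_nonneg (v 0), sq_nonneg (v 1), sq_nonneg (v 2)]
  have h2 : v 2 = 0 := by nlinarith [sq_nonneg (v 0), sq_nonneg (v 1), sq_nonneg (v 2)]
  funext i
  fin_cases i <;> simp only [Pi.zero_apply] <;> first | exact h0 | exact h1 | exact h2

lemma deriv_periodic' {E : Type*} [NormedAddCommGroup E] [NormedSpace ℝ E]
    {f : ℝ → E} {f' : ℝ → E} (hf : ∀ t, HasDerivAt f (f' t) t)
    (hper : ∀ t, f (t + 2*π) = f t) : ∀ t, f' (t + 2*π) = f' t := by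
  intro t
  have h2 := HasDerivAt.comp_add_const t (2*π) (hf (t + 2*π))
  rw [show (fun s => f (s + 2*π)) = f from funext hper] at h2
  exact h2.unique (hf t)

/-- a continuous nonnegative function with vanishing interval integral vanishes. -/
lemma zero_of_integral_zero {f : ℝ → ℝ} {a b : ℝ} (hab : a < b)
    (hc : Continuous f) (h0 : ∀ x ∈ Icc a b, 0 ≤ f x)
    (hI : (∫ x in a..b, f x) = 0) : ∀ x ∈ Icc a b, f x = 0 := by
  intro x hx
  by_contra hne
  have hfx : 0 < f x := lt_of_le_of_ne (h0 x hx) (Ne.symm hne)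
  obtain ⟨δ, hδpos, hδ⟩ := Metric.continuousAt_iff.mp hc.continuousAt (f x / 2) (by linarith)
  set l := max a (x - δ/2) with hl
  set r := min b (x + δ/2) with hr
  have hal : a ≤ l := le_max_left _ _
  have hrb : r ≤ b := min_le_left _ _
  have hlr : l < r := by
    rcases hx with ⟨hax, hxb⟩
    apply max_lt <;> [apply lt_min; apply lt_min] <;> linarith
  have hlow : ∀ y ∈ Icc l r, f x / 2 ≤ f y := by
    intro y hy
    have h1 : dist y x < δ := by
      rw [Real.dist_eq, abs_lt]
      rcases hy with ⟨h2, h3⟩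
      constructor
      · have := le_max_right a (x - δ/2); linarith
      · have := min_le_right b (x + δ/2); linarith
    have := hδ h1
    rw [Real.dist_eq, abs_lt] at this
    linarith [this.1]
  have hint : IntervalIntegrable f volume a b := hc.intervalIntegrable _ _
  have h2 : (∫ y in l..r, f x / 2) ≤ ∫ y in l..r, f y := by
    apply intervalIntegral.integral_mono_on hlr.le
      (intervalIntegrable_const) (hc.intervalIntegrable _ _) hlow
  have h3 : (∫ y in l..r, f y) ≤ ∫ y in a..b, f y := by
    apply intervalIntegral.integral_mono_interval hal hlr.le hrb
    · apply (ae_restrict_iff' measurableSet_Ioc).mpr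
      apply ae_of_all
      intro y hy
      exact h0 y ⟨hy.1.le.trans' (by rfl), hy.2⟩ |>.trans' (by rfl)
    · exact hint
  rw [intervalIntegral.integral_const, smul_eq_mul] at h2
  have : 0 < (r - l) * (f x / 2) := by
    apply mul_pos (by linarith) (by linarith)
  linarith [hI ▸ h3]

lemma sq3_zero : sq3 (0 : Fin 3 → ℝ) = 0 := by simp [sq3]

lemma sq3_cross (v : Fin 3 → ℝ) (t : ℝ) :
    sq3 (crossProduct v (nvec t)) = (v 2)^2 + (v 0 * Real.sin t - v 1 * Real.cos t)^2 := by
  rw [cross_apply]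
  unfold sq3 nvec
  simp only [Matrix.cons_val_zero, Matrix.cons_val_one, Matrix.head_cons,
    Matrix.cons_val_two, Matrix.tail_cons]
  have h := Real.sin_sq_add_cos_sq t
  nlinarith [h]

lemma sq3_nvec (t : ℝ) : sq3 (nvec t) = 1 := by
  unfold sq3 nvec
  simp only [Matrix.cons_val_zero, Matrix.cons_val_one, Matrix.head_cons,
    Matrix.cons_val_two, Matrix.tail_cons]
  nlinarith [Real.sin_sq_add_cos_sq t]

lemma twopi_int : (∫ (_ : ℝ) in (-π)..π, (1:ℝ)) = 2*π := by
  rw [intervalIntegral.integral_const, smul_eq_mul]; ring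

lemma admissible_e3 : AdmissibleWAS (fun _ _ => ![0,0,1]) := by
  refine ⟨contDiff_const, ?_, fun _ _ => rfl, ?_⟩
  · intro z t
    unfold sq3
    norm_num
    exact Or.inl rfl
  · intro z hz
    constructor <;> · simp

lemma cross_e3 (t : ℝ) : crossProduct ![0,0,1] (nvec t) = ![-Real.sin t, Real.cos t, 0] := by
  rw [cross_apply]
  unfold nvec
  norm_num
  exact ⟨one_mul _, one_mul _⟩

lemma energy_e3 (κ : ℝ) : cylEnergy κ (fun _ _ => ![0,0,1]) = 4*π*κ^2 := by
  unfold cylEnergy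
  have h : ∀ z : ℝ, (∫ t in (-π)..π,
      (sq3 (deriv (fun w => (fun (_ _ : ℝ) => ![(0:ℝ),0,1]) w t) z)
        + sq3 (deriv (fun s => (fun (_ _ : ℝ) => ![(0:ℝ),0,1]) z s) t)
        + κ ^ 2 * sq3 (crossProduct ((fun (_ _ : ℝ) => ![(0:ℝ),0,1]) z t) (nvec t))))
      = 2*π*κ^2 := by
    intro z
    have heq : ∀ t : ℝ, (sq3 (deriv (fun w => (fun (_ _ : ℝ) => ![(0:ℝ),0,1]) w t) z)
        + sq3 (deriv (fun s => (fun (_ _ : ℝ) => ![(0:ℝ),0,1]) z s) t)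
        + κ ^ 2 * sq3 (crossProduct ((fun (_ _ : ℝ) => ![(0:ℝ),0,1]) z t) (nvec t))) = κ^2 := by
      intro t
      have h1 : deriv (fun (_ : ℝ) => ![(0:ℝ),0,1]) z = 0 := deriv_const _ _
      have h2 : deriv (fun (_ : ℝ) => ![(0:ℝ),0,1]) t = 0 := deriv_const _ _
      simp only [h1, h2, sq3_zero, cross_e3]
      have : sq3 ![-Real.sin t, Real.cos t, 0] = 1 := by
        unfold sq3
        simp only [Matrix.cons_val_zero, Matrix.cons_val_one, Matrix.head_cons,
          Matrix.cons_val_two, Matrix.tail_cons]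
        nlinarith [Real.sin_sq_add_cos_sq t]
      rw [this]
      ring
    rw [intervalIntegral.integral_congr (fun t _ => heq t)]
    rw [intervalIntegral.integral_const, smul_eq_mul]
    ring
  rw [intervalIntegral.integral_congr (fun z _ => h z)]
  rw [intervalIntegral.integral_const, smul_eq_mul]
  ring

lemma nvec_hasDeriv (t : ℝ) : HasDerivAt (fun s => nvec s) ![-Real.sin t, Real.cos t, 0] t := by
  rw [hasDerivAt_pi]
  intro i
  fin_cases i
  · simpa [nvec] using (Real.hasDerivAt_cos t)
  · simpa [nvec] using (Real.hasDerivAt_sin t)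
  · simpa [nvec] using (hasDerivAt_const t (0:ℝ))

lemma admissible_n : AdmissibleWAS (fun _ t => nvec t) := by
  refine ⟨?_, ?_, ?_, ?_⟩
  · rw [contDiff_pi]
    intro i
    fin_cases i
    · exact (Real.contDiff_cos.of_le le_top).comp contDiff_snd
    · exact (Real.contDiff_sin.of_le le_top).comp contDiff_snd
    · exact contDiff_const
  · intro z t; exact sq3_nvec t
  · intro z t
    show nvec (t + 2*π) = nvec t
    unfold nvec
    rw [Real.cos_add_two_pi, Real.sin_add_two_pi]
  · intro z hz
    constructor
    · show (∫ t in (-π)..π, Real.cos t) = 0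
      rw [_root_.integral_cos]
      simp
    · show (∫ t in (-π)..π, Real.sin t) = 0
      rw [_root_.integral_sin]
      simp

lemma energy_n (κ : ℝ) : cylEnergy κ (fun _ t => nvec t) = 4*π := by
  unfold cylEnergy
  have h : ∀ z : ℝ, (∫ t in (-π)..π,
      (sq3 (deriv (fun w => (fun (_ t' : ℝ) => nvec t') w t) z)
        + sq3 (deriv (fun s => (fun (_ t' : ℝ) => nvec t') z s) t)
        + κ ^ 2 * sq3 (crossProduct ((fun (_ t' : ℝ) => nvec t') z t) (nvec t))))
      = 2*π := by
    intro z
    have heq : ∀ t : ℝ, (sq3 (deriv (fun w => (fun (_ t' : ℝ) => nvec t') w t) z)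
        + sq3 (deriv (fun s => (fun (_ t' : ℝ) => nvec t') z s) t)
        + κ ^ 2 * sq3 (crossProduct ((fun (_ t' : ℝ) => nvec t') z t) (nvec t))) = 1 := by
      intro t
      have h1 : deriv (fun (_ : ℝ) => nvec t) z = 0 := deriv_const _ _
      have h2 : deriv (fun s : ℝ => nvec s) t = ![-Real.sin t, Real.cos t, 0] :=
        (nvec_hasDeriv t).deriv
      simp only [h1, h2, sq3_zero, cross_self]
      have : sq3 ![-Real.sin t, Real.cos t, 0] = 1 := by
        unfold sq3
        simp only [Matrix.cons_val_zero, Matrix.cons_val_one, Matrix.head_cons,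
          Matrix.cons_val_two, Matrix.tail_cons]
        nlinarith [Real.sin_sq_add_cos_sq t]
      rw [this]
      ring
    rw [intervalIntegral.integral_congr (fun t _ => heq t)]
    rw [intervalIntegral.integral_const, smul_eq_mul]
    ring
  rw [intervalIntegral.integral_congr (fun z _ => h z)]
  rw [intervalIntegral.integral_const, smul_eq_mul]
  ring

lemma inplane_classify {x y : ℝ → ℝ} {c₁ c₂ : ℂ}
    (hu : ∀ t : ℝ, ((x t : ℂ) + (y t : ℂ) * I) = c₁ * Complex.exp (t * I) + c₂ * Complex.exp (-(t * I)))
    (hr : ∀ t : ℝ, x t * Real.sin t - y t * Real.cos t = 0) :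
    ∃ α : ℝ, (∀ t, x t = α * Real.cos t) ∧ (∀ t, y t = α * Real.sin t) := by
  have hneg : ∀ t : ℝ, -((t:ℂ) * I) = ((-t : ℝ) : ℂ) * I := by intro t; push_cast; ring
  have hx : ∀ t : ℝ, x t = (c₁.re + c₂.re) * Real.cos t + (c₂.im - c₁.im) * Real.sin t := by
    intro t
    have h := congrArg Complex.re (hu t)
    rw [hneg t] at h
    simp only [Complex.add_re, Complex.mul_re, Complex.ofReal_re, Complex.ofReal_im,
      Complex.I_re, Complex.I_im, Complex.exp_ofReal_mul_I_re, Complex.exp_ofReal_mul_I_im,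
      Real.cos_neg, Real.sin_neg] at h
    linarith [h]
  have hy : ∀ t : ℝ, y t = (c₁.im + c₂.im) * Real.cos t + (c₁.re - c₂.re) * Real.sin t := by
    intro t
    have h := congrArg Complex.im (hu t)
    rw [hneg t] at h
    simp only [Complex.add_im, Complex.mul_im, Complex.ofReal_re, Complex.ofReal_im,
      Complex.I_re, Complex.I_im, Complex.exp_ofReal_mul_I_re, Complex.exp_ofReal_mul_I_im,
      Real.cos_neg, Real.sin_neg] at h
    linarith [h]
  have e0 := hr 0
  rw [hx 0, hy 0, Real.sin_zero, Real.cos_zero] at e0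
  have e1 := hr (π/2)
  rw [hx (π/2), hy (π/2), Real.sin_pi_div_two, Real.cos_pi_div_two] at e1
  have hb1 : c₁.im = 0 := by linarith [e0, e1]
  have hb2 : c₂.im = 0 := by linarith [e0, e1]
  have e2 := hr (π/4)
  rw [hx (π/4), hy (π/4), Real.sin_pi_div_four, Real.cos_pi_div_four, hb1, hb2] at e2
  have hs : (0:ℝ) < Real.sqrt 2 / 2 := by positivity
  have hs2 : (Real.sqrt 2 / 2)^2 = 1/2 := by
    rw [div_pow, Real.sq_sqrt (by norm_num : (0:ℝ) ≤ 2)]; norm_num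
  have ha2 : c₂.re = 0 := by nlinarith [e2, hs2]
  refine ⟨c₁.re, fun t => ?_, fun t => ?_⟩
  · rw [hx t, hb1, hb2, ha2]; ring
  · rw [hy t, hb1, hb2, ha2]; ring

lemma vec3_ext {v : Fin 3 → ℝ} {a b c : ℝ} (h0 : v 0 = a) (h1 : v 1 = b) (h2 : v 2 = c) :
    v = ![a,b,c] := by
  funext i
  fin_cases i
  · simpa using h0
  · simpa using h1
  · simpa using h2

lemma neg_nvec (t : ℝ) : -nvec t = ![-Real.cos t, -Real.sin t, 0] := by
  funext i
  fin_cases i <;> simp [nvec]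

set_option maxHeartbeats 2000000 in
/-- **Axially symmetric energy minimizers**: minimizers of the cylinder energy in
the class of weakly axially symmetric configurations are `z`-invariant, and are
`±e₃` for `0 < κ² < 1`, `±n` for `κ² > 1`, and of the form `u_θ` for `κ² = 1`;
the minimal energy is `4πκ²` for `0 < κ² ≤ 1` and `4π` for `κ² ≥ 1`. -/
theorem axially_symmetric_energy_minimizers
    (κ : ℝ) (hκ : 0 < κ ^ 2)
    (m : ℝ → ℝ → Fin 3 → ℝ)
    (hm : AdmissibleWAS m)
    (hmin : ∀ m' : ℝ → ℝ → Fin 3 → ℝ, AdmissibleWAS m' →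
      cylEnergy κ m ≤ cylEnergy κ m') :
    (∀ z ∈ Icc (-1 : ℝ) 1, ∀ t : ℝ, deriv (fun w => m w t) z = 0) ∧
    (κ ^ 2 < 1 →
      ((∀ z ∈ Icc (-1 : ℝ) 1, ∀ t : ℝ, m z t = ![0, 0, 1]) ∨
       (∀ z ∈ Icc (-1 : ℝ) 1, ∀ t : ℝ, m z t = ![0, 0, -1]))) ∧
    (1 < κ ^ 2 →
      ((∀ z ∈ Icc (-1 : ℝ) 1, ∀ t : ℝ, m z t = nvec t) ∨
       (∀ z ∈ Icc (-1 : ℝ) 1, ∀ t : ℝ, m z t = -nvec t))) ∧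
    (κ ^ 2 = 1 →
      ∃ θ : ℝ, ∀ z ∈ Icc (-1 : ℝ) 1, ∀ t : ℝ,
        m z t = ![Real.sin θ * Real.cos t, Real.sin θ * Real.sin t, Real.cos θ]) ∧
    (κ ^ 2 ≤ 1 → cylEnergy κ m = 4 * π * κ ^ 2) ∧
    (1 ≤ κ ^ 2 → cylEnergy κ m = 4 * π) := by
  obtain ⟨hF, hunit, hper, hmean⟩ := hm
  have hππ : (-π : ℝ) < π := by linarith [pi_pos]
  have hdiff : Differentiable ℝ (fun p : ℝ × ℝ => m p.1 p.2) := hF.differentiable one_ne_zero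
  have hder_z : ∀ z t : ℝ, HasDerivAt (fun w => m w t)
      (fderiv ℝ (fun p : ℝ × ℝ => m p.1 p.2) (z,t) (1,0)) z := by
    intro z t
    have h1 : HasDerivAt (fun w : ℝ => ((w, t) : ℝ×ℝ)) (((1:ℝ),(0:ℝ)) : ℝ×ℝ) z :=
      (hasDerivAt_id z).prodMk (hasDerivAt_const z t)
    exact (hdiff (z,t)).hasFDerivAt.comp_hasDerivAt z h1
  have hder_t : ∀ z t : ℝ, HasDerivAt (fun s => m z s)
      (fderiv ℝ (fun p : ℝ × ℝ => m p.1 p.2) (z,t) (0,1)) t := by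
    intro z t
    have h1 : HasDerivAt (fun s : ℝ => ((z, s) : ℝ×ℝ)) (((0:ℝ),(1:ℝ)) : ℝ×ℝ) t :=
      (hasDerivAt_const t z).prodMk (hasDerivAt_id t)
    exact (hdiff (z,t)).hasFDerivAt.comp_hasDerivAt t h1
  -- continuity infrastructure
  have hfdc : Continuous (fderiv ℝ (fun p : ℝ × ℝ => m p.1 p.2)) := hF.continuous_fderiv one_ne_zero
  have hcz : Continuous (fun p : ℝ×ℝ => fderiv ℝ (fun p : ℝ × ℝ => m p.1 p.2) p (1,0)) :=
    hfdc.clm_apply continuous_const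
  have hct : Continuous (fun p : ℝ×ℝ => fderiv ℝ (fun p : ℝ × ℝ => m p.1 p.2) p (0,1)) :=
    hfdc.clm_apply continuous_const
  have hmc : Continuous (fun p : ℝ×ℝ => m p.1 p.2) := hF.continuous
  have hsq3c : Continuous sq3 := by
    have : sq3 = fun v : Fin 3 → ℝ => v 0 ^ 2 + v 1 ^ 2 + v 2 ^ 2 := rfl
    rw [this]
    exact (((continuous_apply (0 : Fin 3)).pow 2).add
      ((continuous_apply (1 : Fin 3)).pow 2)).add ((continuous_apply (2 : Fin 3)).pow 2)
  have hzmap : ∀ z : ℝ, Continuous (fun t : ℝ => ((z, t) : ℝ×ℝ)) :=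
    fun z => continuous_const.prodMk continuous_id
  -- abbreviations
  set Dt : ℝ → ℝ → Fin 3 → ℝ :=
    fun z t => fderiv ℝ (fun p : ℝ × ℝ => m p.1 p.2) (z,t) (0,1) with hDtdef
  set Dz : ℝ → ℝ → Fin 3 → ℝ :=
    fun z t => fderiv ℝ (fun p : ℝ × ℝ => m p.1 p.2) (z,t) (1,0) with hDzdef
  have hdz_eq : ∀ z t : ℝ, deriv (fun w => m w t) z = Dz z t := fun z t => (hder_z z t).deriv
  have hdt_eq : ∀ z t : ℝ, deriv (fun s => m z s) t = Dt z t := fun z t => (hder_t z t).deriv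
  have hder_t' : ∀ z t : ℝ, HasDerivAt (fun s => m z s) (Dt z t) t := hder_t
  have hcompt : ∀ z t : ℝ, ∀ i, HasDerivAt (fun s => m z s i) (Dt z t i) t :=
    fun z t i => (hasDerivAt_pi.mp (hder_t' z t)) i
  have hpzc : ∀ z : ℝ, Continuous (fun t : ℝ => Dz z t) := fun z => hcz.comp (hzmap z)
  have hptc : ∀ z : ℝ, Continuous (fun t : ℝ => Dt z t) := fun z => hct.comp (hzmap z)
  have hmzc : ∀ z : ℝ, Continuous (fun t : ℝ => m z t) := fun z => hmc.comp (hzmap z)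
  have hrc : ∀ z : ℝ, Continuous (fun t : ℝ => m z t 0 * Real.sin t - m z t 1 * Real.cos t) :=
    fun z => (((continuous_apply (0:Fin 3)).comp (hmzc z)).mul Real.continuous_sin).sub
      (((continuous_apply (1:Fin 3)).comp (hmzc z)).mul Real.continuous_cos)
  have hUc : ∀ z : ℝ, Continuous (fun t : ℝ => (m z t 0)^2 + (m z t 1)^2) :=
    fun z => (((continuous_apply (0:Fin 3)).comp (hmzc z)).pow 2).add
      (((continuous_apply (1:Fin 3)).comp (hmzc z)).pow 2)
  set A : ℝ → ℝ := fun z => ∫ t in (-π)..π, sq3 (Dz z t) with hAdef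
  set B : ℝ → ℝ := fun z => ∫ t in (-π)..π, ((Dt z t 0)^2 + (Dt z t 1)^2) with hBdef
  set C : ℝ → ℝ := fun z => ∫ t in (-π)..π, (Dt z t 2)^2 with hCdef
  set Dd : ℝ → ℝ := fun z => ∫ t in (-π)..π, (m z t 2)^2 with hDddef
  set R : ℝ → ℝ := fun z =>
    ∫ t in (-π)..π, (m z t 0 * Real.sin t - m z t 1 * Real.cos t)^2 with hRdef
  set U : ℝ → ℝ := fun z => ∫ t in (-π)..π, ((m z t 0)^2 + (m z t 1)^2) with hUdef
  set Inner : ℝ → ℝ := fun z => ∫ t in (-π)..π,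
      (sq3 (deriv (fun w => m w t) z) + sq3 (deriv (fun s => m z s) t)
        + κ ^ 2 * sq3 (crossProduct (m z t) (nvec t))) with hInnerdef
  have hE : cylEnergy κ m = ∫ z in (-1:ℝ)..1, Inner z := rfl
  -- nonnegativity
  have hA0 : ∀ z, 0 ≤ A z := fun z =>
    intervalIntegral.integral_nonneg hππ.le (fun t _ => sq3_nonneg _)
  have hC0 : ∀ z, 0 ≤ C z := fun z =>
    intervalIntegral.integral_nonneg hππ.le (fun t _ => by positivity)
  have hDd0 : ∀ z, 0 ≤ Dd z := fun z =>
    intervalIntegral.integral_nonneg hππ.le (fun t _ => by positivity)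
  have hR0 : ∀ z, 0 ≤ R z := fun z =>
    intervalIntegral.integral_nonneg hππ.le (fun t _ => by positivity)
  have hU0 : ∀ z, 0 ≤ U z := fun z =>
    intervalIntegral.integral_nonneg hππ.le (fun t _ => by positivity)
  -- integrability
  have hiA : ∀ z, IntervalIntegrable (fun t => sq3 (Dz z t)) volume (-π) π :=
    fun z => ((hsq3c.comp (hpzc z)).intervalIntegrable _ _)
  have hiB : ∀ z, IntervalIntegrable (fun t => ((Dt z t 0)^2 + (Dt z t 1)^2)) volume (-π) π :=
    fun z => ((((continuous_apply (0:Fin 3)).comp (hptc z)).pow 2).add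
      (((continuous_apply (1:Fin 3)).comp (hptc z)).pow 2)).intervalIntegrable _ _
  have hiC : ∀ z, IntervalIntegrable (fun t => (Dt z t 2)^2) volume (-π) π :=
    fun z => (((continuous_apply (2:Fin 3)).comp (hptc z)).pow 2).intervalIntegrable _ _
  have hiDd : ∀ z, IntervalIntegrable (fun t => (m z t 2)^2) volume (-π) π :=
    fun z => (((continuous_apply (2:Fin 3)).comp (hmzc z)).pow 2).intervalIntegrable _ _
  have hiR : ∀ z, IntervalIntegrable
      (fun t => (m z t 0 * Real.sin t - m z t 1 * Real.cos t)^2) volume (-π) π :=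
    fun z => ((hrc z).pow 2).intervalIntegrable _ _
  have hiU : ∀ z, IntervalIntegrable (fun t => ((m z t 0)^2 + (m z t 1)^2)) volume (-π) π :=
    fun z => (hUc z).intervalIntegrable _ _
  -- pointwise splitting
  have hpoint : ∀ z t : ℝ, (sq3 (deriv (fun w => m w t) z) + sq3 (deriv (fun s => m z s) t)
        + κ ^ 2 * sq3 (crossProduct (m z t) (nvec t)))
      = sq3 (Dz z t) + ((Dt z t 0)^2 + (Dt z t 1)^2) + (Dt z t 2)^2
        + (κ^2 * (m z t 2)^2 + κ^2 * (m z t 0 * Real.sin t - m z t 1 * Real.cos t)^2) := by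
    intro z t
    rw [hdz_eq z t, hdt_eq z t, sq3_cross]
    show sq3 (Dz z t) + sq3 (Dt z t) + _ = _
    show sq3 (Dz z t) + ((Dt z t 0)^2 + (Dt z t 1)^2 + (Dt z t 2)^2) + _ = _
    ring
  have hInner_split : ∀ z, Inner z = A z + B z + C z + (κ^2 * Dd z + κ^2 * R z) := by
    intro z
    show (∫ t in (-π)..π,
      (sq3 (deriv (fun w => m w t) z) + sq3 (deriv (fun s => m z s) t)
        + κ ^ 2 * sq3 (crossProduct (m z t) (nvec t)))) = _
    rw [intervalIntegral.integral_congr (g := fun t => sq3 (Dz z t)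
        + ((Dt z t 0)^2 + (Dt z t 1)^2) + (Dt z t 2)^2
        + (κ^2 * (m z t 2)^2 + κ^2 * (m z t 0 * Real.sin t - m z t 1 * Real.cos t)^2))
      (fun t _ => hpoint z t)]
    rw [intervalIntegral.integral_add (((hiA z).add (hiB z)).add (hiC z))
        (((hiDd z).const_mul (κ^2)).add ((hiR z).const_mul (κ^2)))]
    rw [intervalIntegral.integral_add ((hiA z).add (hiB z)) (hiC z)]
    rw [intervalIntegral.integral_add (hiA z) (hiB z)]
    rw [intervalIntegral.integral_add ((hiDd z).const_mul (κ^2)) ((hiR z).const_mul (κ^2))]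
    rw [intervalIntegral.integral_const_mul, intervalIntegral.integral_const_mul]
  have h1unit : ∀ z t : ℝ, (m z t 0)^2 + (m z t 1)^2 + (m z t 2)^2 = 1 := fun z t => hunit z t
  have hUD : ∀ z, U z + Dd z = 2*π := by
    intro z
    show (∫ t in (-π)..π, ((m z t 0)^2 + (m z t 1)^2)) + (∫ t in (-π)..π, (m z t 2)^2) = 2*π
    rw [← intervalIntegral.integral_add (hiU z) (hiDd z)]
    rw [intervalIntegral.integral_congr (g := fun _ => (1:ℝ)) (fun t _ => by
      have := h1unit z t; dsimp only; linarith)]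
    exact twopi_int
  -- Wirtinger
  have hwirt : ∀ z ∈ Icc (-1:ℝ) 1, U z ≤ B z ∧ (B z = U z →
      ∃ c₁ c₂ : ℂ, ∀ t : ℝ, ((m z t 0 : ℂ) + (m z t 1 : ℂ) * I)
        = c₁ * Complex.exp (t * I) + c₂ * Complex.exp (-(t * I))) := by
    intro z hz
    have hu : ∀ t : ℝ, HasDerivAt (fun s => ((m z s 0 : ℂ) + (m z s 1 : ℂ) * I))
        (((Dt z t 0 : ℂ) + (Dt z t 1 : ℂ) * I)) t := fun t =>
      ((hcompt z t 0).ofReal_comp).add (((hcompt z t 1).ofReal_comp).mul_const I)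
    have hc' : Continuous (fun t : ℝ => ((Dt z t 0 : ℂ) + (Dt z t 1 : ℂ) * I)) :=
      ((Complex.continuous_ofReal.comp ((continuous_apply (0:Fin 3)).comp (hptc z))).add
        ((Complex.continuous_ofReal.comp ((continuous_apply (1:Fin 3)).comp (hptc z))).mul
          continuous_const))
    have huper : ∀ t : ℝ, ((m z (t + 2*π) 0 : ℂ) + (m z (t + 2*π) 1 : ℂ) * I)
        = ((m z t 0 : ℂ) + (m z t 1 : ℂ) * I) := by
      intro t
      rw [hper z t]
    have humean : (∫ t in (-π)..π, ((m z t 0 : ℂ) + (m z t 1 : ℂ) * I)) = 0 := by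
      have hsplit : (∫ t in (-π)..π, ((m z t 0 : ℂ) + (m z t 1 : ℂ) * I))
          = (∫ t in (-π)..π, ((m z t 0 : ℝ) : ℂ)) + (∫ t in (-π)..π, (m z t 1) • (I:ℂ)) := by
        rw [← intervalIntegral.integral_add]
        · apply intervalIntegral.integral_congr
          intro t _
          simp only []
          rw [Complex.real_smul]
        · exact (Complex.continuous_ofReal.comp
            ((continuous_apply (0:Fin 3)).comp (hmzc z))).intervalIntegrable _ _
        · exact ((Complex.continuous_ofReal.comp
            ((continuous_apply (1:Fin 3)).comp (hmzc z))).mul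
              continuous_const).intervalIntegrable _ _
      rw [hsplit, intervalIntegral.integral_ofReal, intervalIntegral.integral_smul_const,
        (hmean z hz).1, (hmean z hz).2]
      simp
    obtain ⟨hineq, hrig⟩ := wirtinger_ineq hu hc' huper humean
    have hBnorm : (∫ t in (-π)..π, ‖((Dt z t 0 : ℂ) + (Dt z t 1 : ℂ) * I)‖^2) = B z := by
      show _ = (∫ t in (-π)..π, ((Dt z t 0)^2 + (Dt z t 1)^2))
      apply intervalIntegral.integral_congr
      intro t _
      simp only []
      rw [Complex.sq_norm, Complex.normSq_add_mul_I]
    have hUnorm : (∫ t in (-π)..π, ‖((m z t 0 : ℂ) + (m z t 1 : ℂ) * I)‖^2) = U z := by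
      show _ = (∫ t in (-π)..π, ((m z t 0)^2 + (m z t 1)^2))
      apply intervalIntegral.integral_congr
      intro t _
      simp only []
      rw [Complex.sq_norm, Complex.normSq_add_mul_I]
    constructor
    · rw [← hBnorm, ← hUnorm]; exact hineq
    · intro hBU
      exact hrig (by rw [hBnorm, hUnorm, hBU])
  -- continuity of Inner
  have hGc : Continuous (fun p : ℝ×ℝ => sq3 (Dz p.1 p.2)
      + ((Dt p.1 p.2 0)^2 + (Dt p.1 p.2 1)^2) + (Dt p.1 p.2 2)^2
      + (κ^2 * (m p.1 p.2 2)^2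
        + κ^2 * (m p.1 p.2 0 * Real.sin p.2 - m p.1 p.2 1 * Real.cos p.2)^2)) := by
    apply Continuous.add
    apply Continuous.add
    apply Continuous.add
    · exact hsq3c.comp hcz
    · exact (((continuous_apply (0:Fin 3)).comp hct).pow 2).add
        (((continuous_apply (1:Fin 3)).comp hct).pow 2)
    · exact ((continuous_apply (2:Fin 3)).comp hct).pow 2
    · apply Continuous.add
      · exact continuous_const.mul (((continuous_apply (2:Fin 3)).comp hmc).pow 2)
      · exact continuous_const.mul (((((continuous_apply (0:Fin 3)).comp hmc).mul
          (Real.continuous_sin.comp continuous_snd)).sub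
          (((continuous_apply (1:Fin 3)).comp hmc).mul
            (Real.continuous_cos.comp continuous_snd))).pow 2)
  have hInnerC : Continuous Inner := by
    have hfun : Inner = fun z => ∫ t in (-π)..π, (fun (zz tt : ℝ) => sq3 (Dz zz tt)
        + ((Dt zz tt 0)^2 + (Dt zz tt 1)^2) + (Dt zz tt 2)^2
        + (κ^2 * (m zz tt 2)^2
          + κ^2 * (m zz tt 0 * Real.sin tt - m zz tt 1 * Real.cos tt)^2)) z t := by
      funext z
      show (∫ t in (-π)..π,
        (sq3 (deriv (fun w => m w t) z) + sq3 (deriv (fun s => m z s) t)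
          + κ ^ 2 * sq3 (crossProduct (m z t) (nvec t)))) = _
      exact intervalIntegral.integral_congr (fun t _ => hpoint z t)
    rw [hfun]
    exact intervalIntegral.continuous_parametric_intervalIntegral_of_continuous'
      (f := fun (zz tt : ℝ) => sq3 (Dz zz tt)
        + ((Dt zz tt 0)^2 + (Dt zz tt 1)^2) + (Dt zz tt 2)^2
        + (κ^2 * (m zz tt 2)^2
          + κ^2 * (m zz tt 0 * Real.sin tt - m zz tt 1 * Real.cos tt)^2)) hGc (-π) π
  -- lower bounds
  have hlow1 : κ^2 ≤ 1 → ∀ z ∈ Icc (-1:ℝ) 1, 2*π*κ^2 ≤ Inner z := by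
    intro hle z hz
    have h1 := hInner_split z
    have h2 := (hwirt z hz).1
    have h3 := hUD z
    have h6 : κ^2 * U z ≤ U z := by nlinarith [hU0 z]
    have h7 : 0 ≤ κ^2 * R z := mul_nonneg hκ.le (hR0 z)
    have h8 : κ^2 * U z + κ^2 * Dd z = κ^2 * (2*π) := by
      have : κ^2 * (U z + Dd z) = κ^2 * (2*π) := by rw [h3]
      linarith [this]
    linarith [hA0 z, hC0 z]
  have hlow2 : 1 ≤ κ^2 → ∀ z ∈ Icc (-1:ℝ) 1, 2*π ≤ Inner z := by
    intro hge z hz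
    have h1 := hInner_split z
    have h2 := (hwirt z hz).1
    have h3 := hUD z
    have h6 : Dd z ≤ κ^2 * Dd z := by nlinarith [hDd0 z]
    have h7 : 0 ≤ κ^2 * R z := mul_nonneg hκ.le (hR0 z)
    linarith [hA0 z, hC0 z]
  have hEint : ∀ c : ℝ, (∀ z ∈ Icc (-1:ℝ) 1, c ≤ Inner z) → 2*c ≤ cylEnergy κ m := by
    intro c hc
    rw [hE]
    have h1 := intervalIntegral.integral_mono_on (by norm_num : (-1:ℝ) ≤ 1)
      (intervalIntegrable_const : IntervalIntegrable (fun _ => c) volume (-1) 1)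
      (hInnerC.intervalIntegrable _ _) hc
    rw [intervalIntegral.integral_const, smul_eq_mul] at h1
    linarith
  have hE1 : κ^2 ≤ 1 → cylEnergy κ m = 4*π*κ^2 := by
    intro hle
    have hub := hmin _ admissible_e3
    rw [energy_e3] at hub
    have hlb := hEint (2*π*κ^2) (hlow1 hle)
    linarith
  have hE2 : 1 ≤ κ^2 → cylEnergy κ m = 4*π := by
    intro hge
    have hub := hmin _ admissible_n
    rw [energy_n] at hub
    have hlb := hEint (2*π) (hlow2 hge)
    linarith
  -- slack analysis
  have hkey : ∀ z ∈ Icc (-1:ℝ) 1, A z = 0 ∧ C z = 0 ∧ R z = 0 ∧ B z = U z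
      ∧ (κ^2 < 1 → U z = 0) ∧ (1 < κ^2 → Dd z = 0) := by
    rcases le_total (κ^2) 1 with hle|hge
    · have hEeq := hE1 hle
      have hval : ∀ z ∈ Icc (-1:ℝ) 1, Inner z = 2*π*κ^2 := by
        have hcont : Continuous (fun z => Inner z - 2*π*κ^2) := hInnerC.sub continuous_const
        have hnn : ∀ z ∈ Icc (-1:ℝ) 1, 0 ≤ Inner z - 2*π*κ^2 := fun z hz => by
          linarith [hlow1 hle z hz]
        have hint0 : (∫ z in (-1:ℝ)..1, (Inner z - 2*π*κ^2)) = 0 := by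
          rw [intervalIntegral.integral_sub (hInnerC.intervalIntegrable _ _)
            intervalIntegrable_const, intervalIntegral.integral_const, ← hE, hEeq, smul_eq_mul]
          ring
        intro z hz
        have := zero_of_integral_zero (by norm_num) hcont hnn hint0 z hz
        linarith
      intro z hz
      have hsp := hInner_split z
      have hv := hval z hz
      have h2 := (hwirt z hz).1
      have h3 := hUD z
      have h6 : κ^2 * U z ≤ U z := by nlinarith [hU0 z]
      have h7 : 0 ≤ κ^2 * R z := mul_nonneg hκ.le (hR0 z)
      have h8 : κ^2 * U z + κ^2 * Dd z = κ^2 * (2*π) := by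
        have : κ^2 * (U z + Dd z) = κ^2 * (2*π) := by rw [h3]
        linarith [this]
      have hAz : A z = 0 := by linarith [hA0 z, hC0 z]
      have h9 : κ^2 * R z = 0 := by linarith [hA0 z, hC0 z]
      have hCz : C z = 0 := by linarith [hA0 z, hC0 z]
      have hRz : R z = 0 := by
        rcases mul_eq_zero.mp h9 with h|h
        · linarith
        · exact h
      have hBU : B z = U z := by linarith [hA0 z, hC0 z]
      refine ⟨hAz, hCz, hRz, hBU, ?_, ?_⟩
      · intro hlt
        have hUs : U z - κ^2 * U z = 0 := by linarith [hA0 z, hC0 z]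
        have h10 : (1 - κ^2) * U z = 0 := by linear_combination hUs
        rcases mul_eq_zero.mp h10 with h|h
        · linarith
        · exact h
      · intro hgt; linarith
    · have hEeq := hE2 hge
      have hval : ∀ z ∈ Icc (-1:ℝ) 1, Inner z = 2*π := by
        have hcont : Continuous (fun z => Inner z - 2*π) := hInnerC.sub continuous_const
        have hnn : ∀ z ∈ Icc (-1:ℝ) 1, 0 ≤ Inner z - 2*π := fun z hz => by
          linarith [hlow2 hge z hz]
        have hint0 : (∫ z in (-1:ℝ)..1, (Inner z - 2*π)) = 0 := by
          rw [intervalIntegral.integral_sub (hInnerC.intervalIntegrable _ _)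
            intervalIntegrable_const, intervalIntegral.integral_const, ← hE, hEeq, smul_eq_mul]
          ring
        intro z hz
        have := zero_of_integral_zero (by norm_num) hcont hnn hint0 z hz
        linarith
      intro z hz
      have hsp := hInner_split z
      have hv := hval z hz
      have h2 := (hwirt z hz).1
      have h3 := hUD z
      have h6 : Dd z ≤ κ^2 * Dd z := by nlinarith [hDd0 z]
      have h7 : 0 ≤ κ^2 * R z := mul_nonneg hκ.le (hR0 z)
      have hAz : A z = 0 := by linarith [hA0 z, hC0 z]
      have h9 : κ^2 * R z = 0 := by linarith [hA0 z, hC0 z]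
      have hCz : C z = 0 := by linarith [hA0 z, hC0 z]
      have hRz : R z = 0 := by
        rcases mul_eq_zero.mp h9 with h|h
        · linarith
        · exact h
      have hBU : B z = U z := by linarith [hA0 z, hC0 z]
      refine ⟨hAz, hCz, hRz, hBU, ?_, ?_⟩
      · intro hlt; linarith
      · intro hgt
        have hDs : κ^2 * Dd z - Dd z = 0 := by linarith [hA0 z, hC0 z]
        have h10 : (κ^2 - 1) * Dd z = 0 := by linear_combination hDs
        rcases mul_eq_zero.mp h10 with h|h
        · linarith
        · exact h
  -- periodic extension helper
  have per_ext0 : ∀ (f : ℝ → ℝ), (∀ t, f (t + 2*π) = f t) →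
      (∀ t ∈ Icc (-π) π, f t = 0) → ∀ t, f t = 0 := by
    intro f hfper hf0 t
    refine periodic_ext (f := f) (g := fun _ => 0) hfper (fun _ => rfl) ?_ t
    intro s hs
    exact hf0 s ⟨hs.1, by linarith [hs.2]⟩
  -- conclusion 1
  have concl1 : ∀ z ∈ Icc (-1:ℝ) 1, ∀ t : ℝ, deriv (fun w => m w t) z = 0 := by
    intro z hz t
    have hA := (hkey z hz).1
    have h0 : ∀ s ∈ Icc (-π) π, sq3 (Dz z s) = 0 :=
      zero_of_integral_zero hππ (hsq3c.comp (hpzc z)) (fun s _ => sq3_nonneg _) hA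
    have h0' : ∀ s ∈ Icc (-π) π, sq3 (deriv (fun w => m w s) z) = 0 := by
      intro s hs
      rw [hdz_eq z s]
      exact h0 s hs
    have hfper : ∀ s : ℝ, sq3 (deriv (fun w => m w (s + 2*π)) z)
        = sq3 (deriv (fun w => m w s) z) := by
      intro s
      rw [show (fun w => m w (s + 2*π)) = (fun w => m w s) from funext fun w => hper w s]
    have hall := per_ext0 (fun s => sq3 (deriv (fun w => m w s) z)) hfper h0'
    exact sq3_eq_zero (hall t)
  -- z-constancy
  have hconst : ∀ z ∈ Icc (-1:ℝ) 1, ∀ t : ℝ, m z t = m 0 t := by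
    intro z hz t
    have hdiffg : ∀ w ∈ uIcc (0:ℝ) z, DifferentiableAt ℝ (fun w' => m w' t) w :=
      fun w _ => (hder_z w t).differentiableAt
    have hsub : uIcc (0:ℝ) z ⊆ Icc (-1:ℝ) 1 := uIcc_subset_Icc (by norm_num) hz
    have hderiv_eq : deriv (fun w' => m w' t) = fun w => Dz w t := by
      funext w
      exact hdz_eq w t
    have hint : IntervalIntegrable (deriv (fun w' => m w' t)) volume 0 z := by
      rw [hderiv_eq]
      exact (hcz.comp (continuous_id.prodMk continuous_const)).intervalIntegrable _ _
    have hftc := intervalIntegral.integral_deriv_eq_sub hdiffg hint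
    have hzero : (∫ w in (0:ℝ)..z, deriv (fun w' => m w' t) w) = 0 := by
      rw [intervalIntegral.integral_congr (g := fun _ => (0 : Fin 3 → ℝ))
        (fun w hw => concl1 w (hsub hw) t)]
      simp
    rw [hzero] at hftc
    exact sub_eq_zero.mp hftc.symm
  -- slice z = 0 facts
  have hz0 : (0:ℝ) ∈ Icc (-1:ℝ) 1 := by norm_num
  obtain ⟨hA00, hC00, hR00, hBU0, hUimp, hDimp⟩ := hkey 0 hz0
  have hDtper : ∀ t, Dt 0 (t + 2*π) = Dt 0 t :=
    deriv_periodic' (hder_t' 0) (fun t => hper 0 t)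
  have hC0pt : ∀ t : ℝ, Dt 0 t 2 = 0 := by
    have h0 : ∀ s ∈ Icc (-π) π, (Dt 0 s 2)^2 = 0 :=
      zero_of_integral_zero hππ (((continuous_apply (2:Fin 3)).comp (hptc 0)).pow 2)
        (fun s _ => sq_nonneg _) hC00
    have hext := per_ext0 (fun t => (Dt 0 t 2)^2) (fun t => by beta_reduce; rw [hDtper t]) h0
    intro t
    have h := hext t
    beta_reduce at h
    exact (pow_eq_zero_iff two_ne_zero).mp h
  have hm2const : ∀ t : ℝ, m 0 t 2 = m 0 0 2 := by
    intro t
    apply is_const_of_deriv_eq_zero (f := fun s => m 0 s 2)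
    · exact fun s => (hcompt 0 s 2).differentiableAt
    · intro s
      rw [(hcompt 0 s 2).deriv]
      exact hC0pt s
  have hR0pt : ∀ t : ℝ, m 0 t 0 * Real.sin t - m 0 t 1 * Real.cos t = 0 := by
    have h0 : ∀ s ∈ Icc (-π) π, (m 0 s 0 * Real.sin s - m 0 s 1 * Real.cos s)^2 = 0 :=
      zero_of_integral_zero hππ ((hrc 0).pow 2) (fun s _ => sq_nonneg _) hR00
    have hext := per_ext0 (fun t => (m 0 t 0 * Real.sin t - m 0 t 1 * Real.cos t)^2)
      (fun t => by beta_reduce; rw [hper 0 t, Real.sin_add_two_pi, Real.cos_add_two_pi]) h0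
    intro t
    have h := hext t
    beta_reduce at h
    exact (pow_eq_zero_iff two_ne_zero).mp h
  -- conclusion 2
  have concl2 : κ^2 < 1 →
      ((∀ z ∈ Icc (-1 : ℝ) 1, ∀ t : ℝ, m z t = ![0, 0, 1]) ∨
       (∀ z ∈ Icc (-1 : ℝ) 1, ∀ t : ℝ, m z t = ![0, 0, -1])) := by
    intro hlt
    have hU00 : U 0 = 0 := hUimp hlt
    have hin : ∀ s ∈ Icc (-π) π, (m 0 s 0)^2 + (m 0 s 1)^2 = 0 :=
      zero_of_integral_zero hππ (hUc 0) (fun s _ => by positivity) hU00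
    have hext := per_ext0 (fun t => (m 0 t 0)^2 + (m 0 t 1)^2)
      (fun t => by beta_reduce; rw [hper 0 t]) hin
    have hx0 : ∀ t, m 0 t 0 = 0 := by
      intro t
      have h := hext t
      beta_reduce at h
      nlinarith [sq_nonneg (m 0 t 0), sq_nonneg (m 0 t 1)]
    have hy0 : ∀ t, m 0 t 1 = 0 := by
      intro t
      have h := hext t
      beta_reduce at h
      nlinarith [sq_nonneg (m 0 t 0), sq_nonneg (m 0 t 1)]
    have hβ : (m 0 0 2)^2 = 1 := by
      have := h1unit 0 0
      rw [hx0 0, hy0 0] at this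
      linarith
    have hcases : m 0 0 2 = 1 ∨ m 0 0 2 = -1 := by
      have h9 : (m 0 0 2 - 1) * (m 0 0 2 + 1) = 0 := by linear_combination hβ
      rcases mul_eq_zero.mp h9 with h|h
      · left; linarith
      · right; linarith
    rcases hcases with h|h
    · left
      intro z hz t
      rw [hconst z hz t]
      exact vec3_ext (hx0 t) (hy0 t) ((hm2const t).trans h)
    · right
      intro z hz t
      rw [hconst z hz t]
      exact vec3_ext (hx0 t) (hy0 t) ((hm2const t).trans h)
  -- conclusion 3
  have concl3 : 1 < κ^2 →
      ((∀ z ∈ Icc (-1 : ℝ) 1, ∀ t : ℝ, m z t = nvec t) ∨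
       (∀ z ∈ Icc (-1 : ℝ) 1, ∀ t : ℝ, m z t = -nvec t)) := by
    intro hgt
    have hD00 : Dd 0 = 0 := hDimp hgt
    have hin : ∀ s ∈ Icc (-π) π, (m 0 s 2)^2 = 0 :=
      zero_of_integral_zero hππ (((continuous_apply (2:Fin 3)).comp (hmzc 0)).pow 2)
        (fun s _ => sq_nonneg _) hD00
    have hext := per_ext0 (fun t => (m 0 t 2)^2) (fun t => by beta_reduce; rw [hper 0 t]) hin
    have hm20 : ∀ t, m 0 t 2 = 0 := by
      intro t
      have h := hext t
      beta_reduce at h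
      exact (pow_eq_zero_iff two_ne_zero).mp h
    obtain ⟨c₁, c₂, hform⟩ := (hwirt 0 hz0).2 hBU0
    obtain ⟨α, hxα, hyα⟩ := inplane_classify (x := fun t => m 0 t 0) (y := fun t => m 0 t 1)
      hform hR0pt
    have hα2 : α^2 = 1 := by
      have := h1unit 0 0
      rw [hxα 0, hyα 0, hm20 0, Real.cos_zero, Real.sin_zero] at this
      nlinarith
    have hcases : α = 1 ∨ α = -1 := by
      have h9 : (α - 1) * (α + 1) = 0 := by linear_combination hα2
      rcases mul_eq_zero.mp h9 with h|h
      · left; linarith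
      · right; linarith
    rcases hcases with h|h
    · left
      intro z hz t
      rw [hconst z hz t]
      show m 0 t = ![Real.cos t, Real.sin t, 0]
      exact vec3_ext (by rw [hxα t, h]; ring) (by rw [hyα t, h]; ring) (hm20 t)
    · right
      intro z hz t
      rw [hconst z hz t, neg_nvec]
      exact vec3_ext (by rw [hxα t, h]; ring) (by rw [hyα t, h]; ring) (hm20 t)
  -- conclusion 4
  have concl4 : κ^2 = 1 →
      ∃ θ : ℝ, ∀ z ∈ Icc (-1 : ℝ) 1, ∀ t : ℝ,
        m z t = ![Real.sin θ * Real.cos t, Real.sin θ * Real.sin t, Real.cos θ] := by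
    intro _
    obtain ⟨c₁, c₂, hform⟩ := (hwirt 0 hz0).2 hBU0
    obtain ⟨α, hxα, hyα⟩ := inplane_classify (x := fun t => m 0 t 0) (y := fun t => m 0 t 1)
      hform hR0pt
    have hαβ : α^2 + (m 0 0 2)^2 = 1 := by
      have := h1unit 0 0
      rw [hxα 0, hyα 0, Real.cos_zero, Real.sin_zero] at this
      nlinarith
    have hβ1 : -1 ≤ m 0 0 2 ∧ m 0 0 2 ≤ 1 := by
      constructor <;> nlinarith [sq_nonneg α, sq_nonneg (m 0 0 2)]
    by_cases hα : 0 ≤ α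
    · refine ⟨Real.arccos (m 0 0 2), ?_⟩
      have hsin : Real.sin (Real.arccos (m 0 0 2)) = α := by
        rw [Real.sin_arccos, show 1 - (m 0 0 2)^2 = α^2 by linarith, Real.sqrt_sq hα]
      have hcos : Real.cos (Real.arccos (m 0 0 2)) = m 0 0 2 :=
        Real.cos_arccos hβ1.1 hβ1.2
      intro z hz t
      rw [hconst z hz t]
      exact vec3_ext (by simp only [hxα t, hsin]) (by simp only [hyα t, hsin]) (by simp only [hm2const t, hcos])
    · refine ⟨-Real.arccos (m 0 0 2), ?_⟩
      have hsin : Real.sin (-Real.arccos (m 0 0 2)) = α := by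
        rw [Real.sin_neg, Real.sin_arccos, show 1 - (m 0 0 2)^2 = α^2 by linarith,
          Real.sqrt_sq_eq_abs, abs_of_neg (lt_of_not_ge hα)]
        ring
      have hcos : Real.cos (-Real.arccos (m 0 0 2)) = m 0 0 2 := by
        rw [Real.cos_neg]
        exact Real.cos_arccos hβ1.1 hβ1.2
      intro z hz t
      rw [hconst z hz t]
      exact vec3_ext (by simp only [hxα t, hsin]) (by simp only [hyα t, hsin]) (by simp only [hm2const t, hcos])
  exact ⟨concl1, concl2, concl3, concl4, fun h => hE1 h, fun h => hE2 h⟩
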